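/- For every integer n ≥ 1, setting x = e^{-1/n} (i.e. x = (1/e)^{1/n}), one has min{1 - x^n, P_n(x)} ≥ 1 - 1/e, where P_n(x) = ∑_{i=0}^{n-1} (1/(i+1)) C(n-1,i) x^{n-1-i} (1-x)^i. -/

import Mathlib

theorem stmt_1 (n : ℕ) (hn : 1 ≤ n) (x : ℝ) (hx : x = Real.exp (-1 / n)) :
    min (1 - x ^ n)
      (∑ i ∈ Finset.range n, (1 / (i + 1 : ℝ)) * (Nat.choose (n - 1) i : ℝ) *
        x ^ (n - 1 - i) * (1 - x) ^ i) ≥ 1 - 1 / Real.exp 1 := by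
  have hn1 : (1:ℝ) ≤ (n:ℝ) := by exact_mod_cast hn
  have hnpos : (0:ℝ) < (n:ℝ) := lt_of_lt_of_le one_pos hn1
  have hxn : x ^ n = 1 / Real.exp 1 := by
    rw [hx, ← Real.exp_nat_mul]
    rw [show (n:ℝ) * (-1/n) = -1 by field_simp]
    rw [Real.exp_neg, one_div]
  have hx1 : x < 1 := by
    have h : (-1:ℝ)/n < 0 := by
      apply div_neg_of_neg_of_pos _ hnpos; norm_num
    have h2 := Real.exp_lt_exp.mpr h
    rwa [Real.exp_zero, ← hx] at h2
  have hxlb : 1 - 1/(n:ℝ) ≤ x := by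
    have h := Real.add_one_le_exp (-1/(n:ℝ))
    rw [← hx, neg_div] at h
    linarith
  have hc1 : (n:ℝ) * (1 - x) ≤ 1 := by
    have h : 1 - x ≤ 1/(n:ℝ) := by linarith
    calc (n:ℝ) * (1 - x) ≤ (n:ℝ) * (1/(n:ℝ)) := by
          apply mul_le_mul_of_nonneg_left h (le_of_lt hnpos)
      _ = 1 := by field_simp
  have hcpos : 0 < (n:ℝ) * (1 - x) := by
    apply mul_pos hnpos; linarith
  have key : (n:ℝ) * (1 - x) * ∑ i ∈ Finset.range n, (1 / (i + 1 : ℝ)) *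
      (Nat.choose (n - 1) i : ℝ) * x ^ (n - 1 - i) * (1 - x) ^ i = 1 - x ^ n := by
    rw [Finset.mul_sum]
    have hterm : ∀ i ∈ Finset.range n,
        (n:ℝ) * (1 - x) * ((1 / (i + 1 : ℝ)) * (Nat.choose (n - 1) i : ℝ) *
          x ^ (n - 1 - i) * (1 - x) ^ i)
        = (1 - x) ^ (i+1) * x ^ (n - (i+1)) * (Nat.choose n (i+1) : ℝ) := by
      intro i hi
      have hchoose : (n:ℝ) * (Nat.choose (n-1) i : ℝ) = (Nat.choose n (i+1) : ℝ) * (i+1) := by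
        have h := Nat.add_one_mul_choose_eq (n-1) i
        have h2 : n - 1 + 1 = n := by omega
        simp only [Nat.succ_eq_add_one, h2] at h
        exact_mod_cast h
      have hip : (i:ℝ) + 1 ≠ 0 := by positivity
      have hexp : n - 1 - i = n - (i+1) := by omega
      rw [hexp]
      field_simp
      linear_combination (x^(n-(i+1)) * (1-x)^(i+1)) * hchoose
    rw [Finset.sum_congr rfl hterm]
    have h1 : ((1-x) + x)^n = ∑ k ∈ Finset.range (n+1),
        (1-x)^k * x^(n-k) * (Nat.choose n k : ℝ) := add_pow _ _ _
    rw [show (1-x) + x = 1 by ring, one_pow] at h1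
    rw [Finset.sum_range_succ'] at h1
    simp at h1
    linarith
  have hsum : ∑ i ∈ Finset.range n, (1 / (i + 1 : ℝ)) *
      (Nat.choose (n - 1) i : ℝ) * x ^ (n - 1 - i) * (1 - x) ^ i
      = (1 - x ^ n) / ((n:ℝ) * (1 - x)) := by
    rw [eq_div_iff (ne_of_gt hcpos)]
    linear_combination key
  have hnum : 0 ≤ 1 - x ^ n := by
    rw [hxn]
    have h1 : 1 ≤ Real.exp 1 := by
      have := Real.add_one_le_exp (1:ℝ); linarith
    have h2 : 1 / Real.exp 1 ≤ 1 := by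
      rw [div_le_one (Real.exp_pos 1)]; exact h1
    linarith
  have hge : (1 - x ^ n) / ((n:ℝ) * (1 - x)) ≥ 1 - x ^ n := by
    rw [ge_iff_le, le_div_iff₀ hcpos]
    have h := mul_le_mul_of_nonneg_left hc1 hnum
    linarith
  rw [ge_iff_le, le_min_iff]
  constructor
  · rw [hxn]
  · rw [hsum]
    calc 1 - 1 / Real.exp 1 = 1 - x ^ n := by rw [hxn]
      _ ≤ (1 - x ^ n) / ((n:ℝ) * (1 - x)) := hge
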